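/- Let u, ũ be orthonormal vectors in ℝ^d (so ⟨u,ũ⟩ = 0 and ‖u‖₂ = ‖ũ‖₂ = 1), and let κ > 3. Then the correlation (κ−3)·Σ_{l=1}^d u_l²·ũ_l² / [sqrt(2 + (κ−3)Σ_l u_l⁴)·sqrt(2 + (κ−3)Σ_l ũ_l⁴)] is at most 1 − ε₁ where ε₁ = 1 − 1/sqrt((2/(κ−3))² + 1) ∈ (0,1). -/

import Mathlib

/-- For orthonormal u, ũ in ℝ^d and κ > 3, the off-diagonal correlation is bounded
away from 1: it is at most 1 − ε₁ with ε₁ = 1 − 1/sqrt((2/(κ−3))² + 1) ∈ (0,1). -/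
theorem offdiag_correlation_bounded_away_from_one
    {d : ℕ} (u w : Fin d → ℝ) (κ : ℝ) (hκ : 3 < κ)
    (hu : (∑ l, (u l) ^ 2) = 1) (hw : (∑ l, (w l) ^ 2) = 1)
    (horth : (∑ l, u l * w l) = 0) :
    0 < 1 - 1 / Real.sqrt ((2 / (κ - 3)) ^ 2 + 1) ∧
    1 - 1 / Real.sqrt ((2 / (κ - 3)) ^ 2 + 1) < 1 ∧
    ((κ - 3) * ∑ l, (u l) ^ 2 * (w l) ^ 2) /
        (Real.sqrt (2 + (κ - 3) * ∑ l, (u l) ^ 4) *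
          Real.sqrt (2 + (κ - 3) * ∑ l, (w l) ^ 4)) ≤
      1 - (1 - 1 / Real.sqrt ((2 / (κ - 3)) ^ 2 + 1)) := by
  have ha : 0 < κ - 3 := by linarith
  set a := κ - 3 with haa
  set c : ℝ := (2 / a) ^ 2 + 1 with hc
  have hc0 : 0 < c := by positivity
  have hc1 : 1 < c := by
    have : 0 < (2 / a) ^ 2 := by positivity
    simp only [hc]; linarith
  have hsc1 : 1 < Real.sqrt c := by
    rw [show (1 : ℝ) = Real.sqrt 1 by simp]
    exact Real.sqrt_lt_sqrt (by norm_num) hc1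
  have hsc0 : 0 < Real.sqrt c := by linarith
  refine ⟨?_, ?_, ?_⟩
  · have : 1 / Real.sqrt c < 1 := by
      rw [div_lt_one hsc0]; exact hsc1
    linarith
  · have : 0 < 1 / Real.sqrt c := by positivity
    linarith
  -- main inequality
  have hS0 : 0 ≤ ∑ l, (u l) ^ 2 * (w l) ^ 2 :=
    Finset.sum_nonneg fun l _ => by positivity
  have hA0 : 0 ≤ ∑ l, (u l) ^ 4 := Finset.sum_nonneg fun l _ => by positivity
  have hB0 : 0 ≤ ∑ l, (w l) ^ 4 := Finset.sum_nonneg fun l _ => by positivity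
  have hA1 : ∑ l, (u l) ^ 4 ≤ 1 := by
    rw [← hu]
    apply Finset.sum_le_sum
    intro l _
    have h1 : (u l) ^ 2 ≤ 1 := by
      rw [← hu]
      exact Finset.single_le_sum (f := fun l => (u l) ^ 2)
        (fun i _ => by positivity) (Finset.mem_univ l)
    nlinarith [sq_nonneg (u l)]
  have hB1 : ∑ l, (w l) ^ 4 ≤ 1 := by
    rw [← hw]
    apply Finset.sum_le_sum
    intro l _
    have h1 : (w l) ^ 2 ≤ 1 := by
      rw [← hw]
      exact Finset.single_le_sum (f := fun l => (w l) ^ 2)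
        (fun i _ => by positivity) (Finset.mem_univ l)
    nlinarith [sq_nonneg (w l)]
  have hCS : (∑ l, (u l) ^ 2 * (w l) ^ 2) ^ 2 ≤
      (∑ l, (u l) ^ 4) * (∑ l, (w l) ^ 4) := by
    have h := Finset.sum_mul_sq_le_sq_mul_sq Finset.univ
      (fun l => (u l) ^ 2) (fun l => (w l) ^ 2)
    simpa [← pow_mul] using h
  set S := ∑ l, (u l) ^ 2 * (w l) ^ 2
  set A := ∑ l, (u l) ^ 4
  set B := ∑ l, (w l) ^ 4
  have hden1 : 0 < 2 + a * A := by nlinarith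
  have hden2 : 0 < 2 + a * B := by nlinarith
  have key : (a * S) ^ 2 * c ≤ (2 + a * A) * (2 + a * B) := by
    have hexp : (a * S) ^ 2 * c = 4 * S ^ 2 + a ^ 2 * S ^ 2 := by
      rw [hc]
      field_simp [ha.ne']
      ring
    rw [hexp]
    nlinarith [mul_nonneg hA0 hB0, mul_le_mul_of_nonneg_left hCS (mul_nonneg ha.le ha.le),
      mul_nonneg ha.le hA0, mul_nonneg ha.le hB0, sq_nonneg (A - B)]
  have goal : a * S / (Real.sqrt (2 + a * A) * Real.sqrt (2 + a * B)) ≤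
      1 / Real.sqrt c := by
    rw [div_le_div_iff₀ (by positivity) hsc0, one_mul]
    have hLHS : a * S * Real.sqrt c = Real.sqrt ((a * S) ^ 2 * c) := by
      rw [Real.sqrt_mul (sq_nonneg _), Real.sqrt_sq (by positivity)]
    have hRHS : Real.sqrt (2 + a * A) * Real.sqrt (2 + a * B) =
        Real.sqrt ((2 + a * A) * (2 + a * B)) :=
      (Real.sqrt_mul hden1.le _).symm
    rw [hLHS, hRHS]
    exact Real.sqrt_le_sqrt key
  calc a * S / (Real.sqrt (2 + a * A) * Real.sqrt (2 + a * B)) ≤ 1 / Real.sqrt c := goal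
    _ = 1 - (1 - 1 / Real.sqrt c) := by ring
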